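/- Let A, B ∈ ℝ^{m×n} have rank n with A = B C for invertible C ∈ ℝ^{n×n}; let E_A, E_B be perturbations with ε_A = ‖E_A‖/‖A‖, ε_B = ‖E_B‖/‖B‖. Let x* satisfy BᵀA x* = Bᵀ b, and suppose x̂ ≠ 0 satisfies (B+E_B)ᵀ(A+E_A) x̂ = (B+E_B)ᵀ b. Then ‖x̂ − x*‖/‖x̂‖ ≤ κ(BᵀA)·ν·( ε_B·‖A x̂ − b‖/(‖A‖·‖x̂‖) + (1+ε_B)·ε_A ), where ν = ‖B‖·‖A‖/‖BᵀA‖ and κ(BᵀA) = ‖BᵀA‖·‖(BᵀA)⁻¹‖. -/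

import Mathlib

open Matrix

/-- Spectral (operator 2-) norm of a real matrix. -/
noncomputable def spNorm {m n : ℕ} (M : Matrix (Fin m) (Fin n) ℝ) : ℝ :=
  ‖LinearMap.toContinuousLinearMap (Matrix.toEuclideanLin M)‖

/-- Euclidean 2-norm of a real vector. -/
noncomputable def vNorm {n : ℕ} (x : Fin n → ℝ) : ℝ :=
  ‖(WithLp.equiv 2 (Fin n → ℝ)).symm x‖

/-- Moore–Penrose left inverse of a full column rank matrix. -/
noncomputable def pinv {m n : ℕ} (A : Matrix (Fin m) (Fin n) ℝ) : Matrix (Fin n) (Fin m) ℝ :=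
  (Aᵀ * A)⁻¹ * Aᵀ

/-- Condition number with respect to left inversion. -/
noncomputable def kappa {m n : ℕ} (A : Matrix (Fin m) (Fin n) ℝ) : ℝ :=
  spNorm A * spNorm (pinv A)

open scoped Matrix.Norms.L2Operator

lemma spNorm_eq_norm {m n : ℕ} (M : Matrix (Fin m) (Fin n) ℝ) : spNorm M = ‖M‖ := rfl

lemma vNorm_mulVec_le {m n : ℕ} (M : Matrix (Fin m) (Fin n) ℝ) (x : Fin n → ℝ) :
    vNorm (M *ᵥ x) ≤ spNorm M * vNorm x :=
  M.l2_opNorm_mulVec ((WithLp.equiv 2 (Fin n → ℝ)).symm x)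

lemma vNorm_sub_le {n : ℕ} (x y : Fin n → ℝ) : vNorm (x - y) ≤ vNorm x + vNorm y :=
  norm_sub_le ((WithLp.equiv 2 (Fin n → ℝ)).symm x) ((WithLp.equiv 2 (Fin n → ℝ)).symm y)

lemma vNorm_sub_rev {n : ℕ} (x y : Fin n → ℝ) : vNorm (x - y) = vNorm (y - x) :=
  norm_sub_rev ((WithLp.equiv 2 (Fin n → ℝ)).symm x) ((WithLp.equiv 2 (Fin n → ℝ)).symm y)

lemma vNorm_nonneg {n : ℕ} (x : Fin n → ℝ) : 0 ≤ vNorm x := norm_nonneg _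

lemma vNorm_pos {n : ℕ} {x : Fin n → ℝ} (hx : x ≠ 0) : 0 < vNorm x :=
  norm_pos_iff.mpr (fun h => hx ((WithLp.equiv 2 (Fin n → ℝ)).symm.injective h))

lemma spNorm_nonneg {m n : ℕ} (M : Matrix (Fin m) (Fin n) ℝ) : 0 ≤ spNorm M := norm_nonneg _

lemma spNorm_pos {m n : ℕ} {M : Matrix (Fin m) (Fin n) ℝ} (hM : M ≠ 0) : 0 < spNorm M := by
  rw [spNorm_eq_norm]; exact norm_pos_iff.mpr hM

lemma spNorm_transpose {m n : ℕ} (M : Matrix (Fin m) (Fin n) ℝ) : spNorm Mᵀ = spNorm M := by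
  have h : Mᴴ = Mᵀ := by ext i j; simp [conjTranspose_apply]
  rw [spNorm_eq_norm, spNorm_eq_norm, ← h]
  exact M.l2_opNorm_conjTranspose

lemma isUnit_det_of_rank {n : ℕ} (M : Matrix (Fin n) (Fin n) ℝ) (h : M.rank = n) :
    IsUnit M.det := by
  have hsurj : Function.Surjective M.mulVec := by
    have htop : LinearMap.range M.mulVecLin = ⊤ := by
      apply Submodule.eq_top_of_finrank_eq
      rw [Matrix.rank] at h
      simp [h]
    intro y
    obtain ⟨x, hx⟩ := (LinearMap.range_eq_top.mp htop) y
    exact ⟨x, hx⟩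
  exact (Matrix.isUnit_iff_isUnit_det M).mp (Matrix.mulVec_surjective_iff_isUnit.mp hsurj)

theorem stmt_11 {m n : ℕ} (A B EA EB : Matrix (Fin m) (Fin n) ℝ)
    (C : Matrix (Fin n) (Fin n) ℝ)
    (hA : A.rank = n) (hB : B.rank = n) (hC : IsUnit C.det) (hAC : A = B * C)
    (b : Fin m → ℝ) (xs xh : Fin n → ℝ)
    (εA εB : ℝ) (hεA : εA = spNorm EA / spNorm A) (hεB : εB = spNorm EB / spNorm B)
    (hxs : (Bᵀ * A) *ᵥ xs = Bᵀ *ᵥ b)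
    (hxh : ((B + EB)ᵀ * (A + EA)) *ᵥ xh = (B + EB)ᵀ *ᵥ b)
    (hne : xh ≠ 0)
    (ν : ℝ) (hν : ν = spNorm B * spNorm A / spNorm (Bᵀ * A))
    (κ : ℝ) (hκ : κ = spNorm (Bᵀ * A) * spNorm (Bᵀ * A)⁻¹) :
    vNorm (xh - xs) / vNorm xh ≤
      κ * ν * (εB * (vNorm (A *ᵥ xh - b) / (spNorm A * vNorm xh)) + (1 + εB) * εA) := by
  rcases Nat.eq_zero_or_pos n with hn | hn
  · subst hn
    exact absurd (Subsingleton.elim xh 0) hne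
  -- A and B are nonzero
  have hAne : A ≠ 0 := by
    intro h; rw [h, Matrix.rank_zero] at hA; omega
  have hBne : B ≠ 0 := by
    intro h; rw [h, Matrix.rank_zero] at hB; omega
  -- D := Bᵀ * A is invertible
  set D := Bᵀ * A with hD
  have hDunit : IsUnit D.det := by
    have h1 : (Bᵀ * B).rank = n := by
      rw [Matrix.rank_transpose_mul_self]; exact hB
    have h2 : IsUnit (Bᵀ * B).det := isUnit_det_of_rank _ h1
    have : D = (Bᵀ * B) * C := by rw [hD, hAC, Matrix.mul_assoc]
    rw [this, Matrix.det_mul]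
    exact h2.mul hC
  have hDne : D ≠ 0 := by
    intro h
    rw [h, (haveI : Nonempty (Fin n) := ⟨⟨0, hn⟩⟩; Matrix.det_zero)] at hDunit
    exact (by simpa using hDunit : ¬ IsUnit (0:ℝ)) hDunit
  -- key identity
  have key : D *ᵥ (xh - xs) = EBᵀ *ᵥ (b - (A + EA) *ᵥ xh) - Bᵀ *ᵥ (EA *ᵥ xh) := by
    have h1 := hxh
    have h2 : Bᵀ *ᵥ (A *ᵥ xs) = Bᵀ *ᵥ b := by
      rw [Matrix.mulVec_mulVec]; exact hxs
    simp only [hD, transpose_add, Matrix.add_mul, Matrix.mul_add, Matrix.add_mulVec,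
      ← Matrix.mulVec_mulVec, Matrix.mulVec_add, Matrix.mulVec_sub] at h1 ⊢
    linear_combination h1 - h2
  have hinv : xh - xs = D⁻¹ *ᵥ (EBᵀ *ᵥ (b - (A + EA) *ᵥ xh) - Bᵀ *ᵥ (EA *ᵥ xh)) := by
    rw [← key, Matrix.mulVec_mulVec, Matrix.nonsing_inv_mul D hDunit, Matrix.one_mulVec]
  -- norms
  set t := vNorm xh with ht
  set r := vNorm (A *ᵥ xh - b) with hr
  have htpos : 0 < t := vNorm_pos hne
  have hApos : 0 < spNorm A := spNorm_pos hAne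
  have hBpos : 0 < spNorm B := spNorm_pos hBne
  have hDpos : 0 < spNorm D := spNorm_pos hDne
  have bound1 : vNorm (b - (A + EA) *ᵥ xh) ≤ r + spNorm EA * t := by
    have e1 : b - (A + EA) *ᵥ xh = (b - A *ᵥ xh) - EA *ᵥ xh := by
      rw [Matrix.add_mulVec]; abel
    rw [e1]
    calc vNorm ((b - A *ᵥ xh) - EA *ᵥ xh) ≤ vNorm (b - A *ᵥ xh) + vNorm (EA *ᵥ xh) :=
          vNorm_sub_le _ _
      _ ≤ r + spNorm EA * t := by
          rw [vNorm_sub_rev b (A *ᵥ xh)]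
          exact add_le_add le_rfl (vNorm_mulVec_le _ _)
  have bound2 : vNorm (xh - xs) ≤
      spNorm D⁻¹ * (spNorm EB * (r + spNorm EA * t) + spNorm B * (spNorm EA * t)) := by
    rw [hinv]
    calc vNorm (D⁻¹ *ᵥ (EBᵀ *ᵥ (b - (A + EA) *ᵥ xh) - Bᵀ *ᵥ (EA *ᵥ xh)))
        ≤ spNorm D⁻¹ * vNorm (EBᵀ *ᵥ (b - (A + EA) *ᵥ xh) - Bᵀ *ᵥ (EA *ᵥ xh)) :=
          vNorm_mulVec_le _ _
      _ ≤ spNorm D⁻¹ * (spNorm EB * (r + spNorm EA * t) + spNorm B * (spNorm EA * t)) := by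
          apply mul_le_mul_of_nonneg_left _ (spNorm_nonneg _)
          calc vNorm (EBᵀ *ᵥ (b - (A + EA) *ᵥ xh) - Bᵀ *ᵥ (EA *ᵥ xh))
              ≤ vNorm (EBᵀ *ᵥ (b - (A + EA) *ᵥ xh)) + vNorm (Bᵀ *ᵥ (EA *ᵥ xh)) :=
                vNorm_sub_le _ _
            _ ≤ spNorm EB * (r + spNorm EA * t) + spNorm B * (spNorm EA * t) := by
                apply add_le_add
                · calc vNorm (EBᵀ *ᵥ (b - (A + EA) *ᵥ xh))
                      ≤ spNorm EBᵀ * vNorm (b - (A + EA) *ᵥ xh) := vNorm_mulVec_le _ _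
                    _ ≤ spNorm EB * (r + spNorm EA * t) := by
                        rw [spNorm_transpose]
                        exact mul_le_mul_of_nonneg_left bound1 (spNorm_nonneg _)
                · calc vNorm (Bᵀ *ᵥ (EA *ᵥ xh))
                      ≤ spNorm Bᵀ * vNorm (EA *ᵥ xh) := vNorm_mulVec_le _ _
                    _ ≤ spNorm B * (spNorm EA * t) := by
                        rw [spNorm_transpose]
                        exact mul_le_mul_of_nonneg_left (vNorm_mulVec_le _ _) (spNorm_nonneg _)
  rw [div_le_iff₀ htpos]
  have hrhs : κ * ν * (εB * (r / (spNorm A * t)) + (1 + εB) * εA) * t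
      = spNorm D⁻¹ * (spNorm EB * (r + spNorm EA * t) + spNorm B * (spNorm EA * t)) := by
    subst hκ hν hεA hεB
    field_simp
    ring
  rw [hrhs]
  exact bound2
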